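/- Let H be the X-shaped board inscribed in the n×n grid (the union of the two diagonals), with the 2n row and column switches. Then the maximum discrepancy of H equals n: for every ±1 assignment on H there exist switch settings achieving discrepancy at least n, and there is an assignment for which no switch setting exceeds n. -/

import Mathlib

/-- The X-shaped board inscribed in the `n × n` grid (union of the two
diagonals), 0-indexed: `(i,j)` with `j = i` or `i + j = n - 1`. -/
def xBoard (n : ℕ) : Finset (Fin n × Fin n) :=
  Finset.univ.filter (fun p => p.2 = p.1 ∨ (p.1 : ℕ) + (p.2 : ℕ) = n - 1)

open Finset

def pSet (n : ℕ) : Finset (Fin n) := univ.filter (fun i => i < i.rev)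
def cSet (n : ℕ) : Finset (Fin n) := univ.filter (fun i => i = i.rev)

lemma mem_xBoard_diag (n : ℕ) (i : Fin n) : (i, i) ∈ xBoard n := by
  simp [xBoard]

lemma mem_xBoard_anti (n : ℕ) (i : Fin n) : (i, i.rev) ∈ xBoard n := by
  simp only [xBoard, mem_filter, mem_univ, true_and]
  right
  have := Fin.val_rev i
  have := i.isLt
  omega

lemma sum_pairs (n : ℕ) (g : Fin n → ℤ) :
    ∑ i, g i = ∑ i ∈ pSet n, (g i + g i.rev) + ∑ i ∈ cSet n, g i := by
  have h1 : ∑ i, g i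
      = ∑ i ∈ univ.filter (fun i : Fin n => i ≤ i.rev), g i
        + ∑ i ∈ univ.filter (fun i : Fin n => ¬ i ≤ i.rev), g i :=
    (Finset.sum_filter_add_sum_filter_not _ _ _).symm
  have h2 : ∑ i ∈ univ.filter (fun i : Fin n => i ≤ i.rev), g i
      = ∑ i ∈ pSet n, g i + ∑ i ∈ cSet n, g i := by
    rw [← Finset.sum_filter_add_sum_filter_not (univ.filter (fun i : Fin n => i ≤ i.rev))
        (fun i => i < i.rev) g]
    congr 1
    · congr 1
      ext i
      simp only [pSet, mem_filter, mem_univ, true_and]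
      constructor
      · rintro ⟨h, h'⟩; exact h'
      · intro h; exact ⟨le_of_lt h, h⟩
    · congr 1
      ext i
      simp only [cSet, mem_filter, mem_univ, true_and]
      constructor
      · rintro ⟨h, h'⟩; exact le_antisymm h (not_lt.mp h')
      · intro h; exact ⟨le_of_eq h, by simp [← h]⟩
  have h3 : ∑ i ∈ univ.filter (fun i : Fin n => ¬ i ≤ i.rev), g i
      = ∑ i ∈ pSet n, g i.rev := by
    apply Finset.sum_nbij' (fun i => Fin.rev i) (fun i => Fin.rev i)
    · intro i hi
      simp only [mem_filter, mem_univ, true_and, not_le] at hi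
      simp only [pSet, mem_filter, mem_univ, true_and, Fin.rev_rev]
      exact hi
    · intro i hi
      simp only [pSet, mem_filter, mem_univ, true_and] at hi
      simp only [mem_filter, mem_univ, true_and, not_le, Fin.rev_rev]
      exact hi
    · intro i _; exact Fin.rev_rev i
    · intro i _; exact Fin.rev_rev i
    · intro i _; rw [Fin.rev_rev]
  rw [h1, h2, h3, Finset.sum_add_distrib]
  ring

lemma sum_xBoard (n : ℕ) (f : Fin n × Fin n → ℤ) :
    ∑ p ∈ xBoard n, f p
      = ∑ i, (f (i, i) + f (i, i.rev)) - ∑ i ∈ cSet n, f (i, i) := by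
  classical
  have hD : xBoard n
      = (univ.image (fun i : Fin n => (i, i))) ∪ (univ.image (fun i : Fin n => (i, i.rev))) := by
    ext ⟨p1, p2⟩
    simp only [xBoard, mem_filter, mem_univ, true_and, mem_union, mem_image]
    constructor
    · rintro (h | h)
      · exact Or.inl ⟨p1, by simp [h]⟩
      · refine Or.inr ⟨p1, ?_⟩
        have h1 := p1.isLt; have h2 := p2.isLt
        have : p2 = p1.rev := by
          apply Fin.ext; rw [Fin.val_rev]; omega
        simp [this]
    · rintro (⟨i, hi⟩ | ⟨i, hi⟩)
      · obtain ⟨h1, h2⟩ := Prod.mk.injEq .. ▸ hi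
        left; rw [← h1, ← h2]
      · obtain ⟨h1, h2⟩ := Prod.mk.injEq .. ▸ hi
        right; rw [← h1, ← h2, Fin.val_rev]
        have := i.isLt; omega
  have hI : (univ.image (fun i : Fin n => (i, i))) ∩ (univ.image (fun i : Fin n => (i, i.rev)))
      = (cSet n).image (fun i : Fin n => (i, i)) := by
    ext ⟨p1, p2⟩
    simp only [mem_inter, mem_image, mem_univ, true_and, cSet, mem_filter]
    constructor
    · rintro ⟨⟨i, hi⟩, ⟨j, hj⟩⟩
      rw [Prod.ext_iff] at hi hj
      obtain ⟨h1, h2⟩ := hi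
      obtain ⟨h3, h4⟩ := hj
      dsimp at h1 h2 h3 h4
      subst h1; subst h2
      refine ⟨j, ?_, ?_⟩
      · exact h3.trans h4.symm
      · rw [h3]
    · rintro ⟨i, ⟨hc, hi⟩⟩
      exact ⟨⟨i, hi⟩, ⟨i, by rw [← hc]; exact hi⟩⟩
  have hinj1 : ∀ S : Finset (Fin n), ∀ x ∈ S, ∀ y ∈ S,
      ((x, x) : Fin n × Fin n) = (y, y) → x = y := by
    intro S x _ y _ h; rw [Prod.ext_iff] at h; exact h.1
  have hinj2 : ∀ x ∈ (univ : Finset (Fin n)), ∀ y ∈ (univ : Finset (Fin n)),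
      ((x, x.rev) : Fin n × Fin n) = (y, y.rev) → x = y := by
    intro x _ y _ h; rw [Prod.ext_iff] at h; exact h.1
  have key := Finset.sum_union_inter (s₁ := univ.image (fun i : Fin n => (i, i)))
    (s₂ := univ.image (fun i : Fin n => (i, i.rev))) (f := f)
  rw [← hD, hI] at key
  rw [Finset.sum_image (hinj1 _), Finset.sum_image hinj2, Finset.sum_image (hinj1 _)] at key
  rw [Finset.sum_add_distrib]
  omega

lemma master (n : ℕ) (f : Fin n × Fin n → ℤ) :
    ∑ p ∈ xBoard n, f p
      = ∑ i ∈ pSet n, (f (i, i) + f (i, i.rev) + f (i.rev, i) + f (i.rev, i.rev))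
        + ∑ i ∈ cSet n, f (i, i) := by
  rw [sum_xBoard, sum_pairs n (fun i => f (i, i) + f (i, i.rev))]
  have hP : ∑ i ∈ pSet n, (f (i, i) + f (i, i.rev) + (f (i.rev, i.rev) + f (i.rev, i.rev.rev)))
      = ∑ i ∈ pSet n, (f (i, i) + f (i, i.rev) + f (i.rev, i) + f (i.rev, i.rev)) := by
    apply Finset.sum_congr rfl
    intro i _
    rw [Fin.rev_rev]
    ring
  have hC : ∑ i ∈ cSet n, (f (i, i) + f (i, i.rev))
      = ∑ i ∈ cSet n, (f (i, i) + f (i, i)) := by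
    apply Finset.sum_congr rfl
    intro i hi
    simp only [cSet, mem_filter] at hi
    rw [← hi.2]
  rw [hP, hC,
    show ∑ i ∈ cSet n, (f (i, i) + f (i, i)) = ∑ i ∈ cSet n, f (i, i) + ∑ i ∈ cSet n, f (i, i)
      from Finset.sum_add_distrib]
  ring

lemma card_pSet (n : ℕ) : (pSet n).card = n / 2 := by
  have : (pSet n).card = ((Finset.range n).filter (fun m => 2 * m + 1 < n)).card := by
    refine Finset.card_nbij (fun i : Fin n => (i : ℕ)) ?_ ?_ ?_
    · intro i hi
      simp only [Finset.mem_coe, pSet, mem_filter, mem_univ, true_and, Fin.lt_def, Fin.val_rev] at hi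
      simp only [Finset.mem_coe, mem_filter, mem_range]
      have := i.isLt
      omega
    · intro i _ j _ h
      exact Fin.ext h
    · intro m hm
      simp only [Finset.coe_filter, mem_range, Set.mem_setOf_eq] at hm
      refine ⟨⟨m, hm.1⟩, ?_, rfl⟩
      simp only [Finset.mem_coe, pSet, mem_filter, mem_univ, true_and, Fin.lt_def, Fin.val_rev]
      omega
  rw [this]
  have h2 : (Finset.range n).filter (fun m => 2 * m + 1 < n) = Finset.range (n / 2) := by
    ext m
    simp only [mem_filter, mem_range]
    omega
  rw [h2, Finset.card_range]

lemma card_cSet (n : ℕ) : (cSet n).card = n % 2 := by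
  rcases Nat.even_or_odd n with he | ho
  · have : cSet n = ∅ := by
      ext i
      simp only [cSet, mem_filter, mem_univ, true_and, Finset.notMem_empty, iff_false]
      intro h
      have h2 := congrArg Fin.val h
      rw [Fin.val_rev] at h2
      have := i.isLt
      obtain ⟨k, hk⟩ := he
      omega
    rw [this]
    obtain ⟨k, hk⟩ := he
    simp
    omega
  · obtain ⟨k, hk⟩ := ho
    have hkn : k < n := by omega
    have : cSet n = {⟨k, hkn⟩} := by
      ext i
      simp only [cSet, mem_filter, mem_univ, true_and, Finset.mem_singleton]
      constructor
      · intro h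
        have h2 := congrArg Fin.val h
        rw [Fin.val_rev] at h2
        have := i.isLt
        apply Fin.ext
        simp only
        omega
      · intro h
        subst h
        apply Fin.ext
        rw [Fin.val_rev]
        simp only
        omega
    rw [this]
    simp
    omega

/-- Switch choice for rows in the lower bound. -/
def lowX (n : ℕ) (a : Fin n × Fin n → ℤ) : Fin n → ℤ := fun j =>
  if j ≤ j.rev then 1
  else if 0 ≤ a (j, j.rev) * a (j.rev, j.rev) + a (j, j) * a (j.rev, j) then 1 else -1

/-- Switch choice for columns in the lower bound. -/
def lowY (n : ℕ) (a : Fin n × Fin n → ℤ) : Fin n → ℤ := fun j =>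
  if j ≤ j.rev then a (j, j) else a (j.rev, j)

/-- Hadamard-patterned assignment for the upper bound. -/
def hadA (n : ℕ) : Fin n × Fin n → ℤ := fun p => if (p.2 : ℕ) < (p.1 : ℕ) then -1 else 1

lemma hn_sum (n : ℕ) : (n : ℤ) = ∑ _i ∈ pSet n, (2 : ℤ) + ∑ _i ∈ cSet n, (1 : ℤ) := by
  rw [Finset.sum_const, Finset.sum_const, card_pSet, card_cSet]
  simp only [nsmul_eq_mul]
  push_cast
  omega

/-- The maximum discrepancy of the X-shaped board equals `n`: every `±1`
assignment admits switch settings achieving discrepancy at least `n`, and some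
assignment admits no switch setting with discrepancy exceeding `n`. -/
theorem stmt_6 (n : ℕ) :
    (∀ a : Fin n × Fin n → ℤ, (∀ p ∈ xBoard n, a p = 1 ∨ a p = -1) →
      ∃ x y : Fin n → ℤ, (∀ i, x i = 1 ∨ x i = -1) ∧ (∀ j, y j = 1 ∨ y j = -1) ∧
        (n : ℤ) ≤ ∑ p ∈ xBoard n, a p * x p.1 * y p.2) ∧
    (∃ a : Fin n × Fin n → ℤ, (∀ p ∈ xBoard n, a p = 1 ∨ a p = -1) ∧
      ∀ x y : Fin n → ℤ, (∀ i, x i = 1 ∨ x i = -1) → (∀ j, y j = 1 ∨ y j = -1) →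
        ∑ p ∈ xBoard n, a p * x p.1 * y p.2 ≤ (n : ℤ)) := by
  constructor
  · -- lower bound
    intro a ha
    refine ⟨lowX n a, lowY n a, ?_, ?_, ?_⟩
    · intro i
      unfold lowX
      split_ifs <;> simp
    · intro i
      unfold lowY
      split_ifs
      · exact ha _ (mem_xBoard_diag n i)
      · have hm := mem_xBoard_anti n i.rev
        rw [Fin.rev_rev] at hm
        exact ha _ hm
    · rw [master, hn_sum]
      apply add_le_add
      · apply Finset.sum_le_sum
        intro i hi
        simp only [pSet, mem_filter, mem_univ, true_and] at hi
        have h1 : i ≤ i.rev := le_of_lt hi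
        have h2 : ¬ (i.rev ≤ i.rev.rev) := by rw [Fin.rev_rev]; exact not_le.mpr hi
        have ex1 : lowX n a i = 1 := if_pos h1
        have ey1 : lowY n a i = a (i, i) := if_pos h1
        have ex2 : lowX n a i.rev
            = (if 0 ≤ a (i.rev, i) * a (i, i) + a (i.rev, i.rev) * a (i, i.rev)
               then 1 else -1) := by
          unfold lowX
          rw [if_neg h2, Fin.rev_rev]
        have ey2 : lowY n a i.rev = a (i, i.rev) := by
          unfold lowY
          rw [if_neg h2, Fin.rev_rev]
        rw [ex1, ey1, ex2, ey2]
        have hA : a (i, i) * a (i, i) = 1 := by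
          rcases ha _ (mem_xBoard_diag n i) with h | h <;> rw [h] <;> norm_num
        have hB : a (i, i.rev) * a (i, i.rev) = 1 := by
          rcases ha _ (mem_xBoard_anti n i) with h | h <;> rw [h] <;> norm_num
        split_ifs with hs
        · nlinarith
        · push_neg at hs
          nlinarith
      · apply Finset.sum_le_sum
        intro i hi
        simp only [cSet, mem_filter, mem_univ, true_and] at hi
        have h1 : i ≤ i.rev := le_of_eq hi
        have ex1 : lowX n a i = 1 := if_pos h1
        have ey1 : lowY n a i = a (i, i) := if_pos h1
        rw [ex1, ey1]
        have hA : a (i, i) * a (i, i) = 1 := by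
          rcases ha _ (mem_xBoard_diag n i) with h | h <;> rw [h] <;> norm_num
        nlinarith
  · -- upper bound
    refine ⟨hadA n, ?_, ?_⟩
    · intro p _
      unfold hadA
      split_ifs <;> simp
    · intro x y hx hy
      rw [master, hn_sum]
      apply add_le_add
      · apply Finset.sum_le_sum
        intro i hi
        simp only [pSet, mem_filter, mem_univ, true_and] at hi
        have hvr : (i : ℕ) < (i.rev : ℕ) := hi
        have e1 : hadA n (i, i) = 1 := if_neg (lt_irrefl _)
        have e2 : hadA n (i, i.rev) = 1 := if_neg (not_lt.mpr (le_of_lt hvr))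
        have e3 : hadA n (i.rev, i) = -1 := if_pos hvr
        have e4 : hadA n (i.rev, i.rev) = 1 := if_neg (lt_irrefl _)
        rw [e1, e2, e3, e4]
        rcases hx i with h1 | h1 <;> rcases hx i.rev with h2 | h2 <;>
          rcases hy i with h3 | h3 <;> rcases hy i.rev with h4 | h4 <;>
          rw [h1, h2, h3, h4] <;> norm_num
      · apply Finset.sum_le_sum
        intro i hi
        have e1 : hadA n (i, i) = 1 := if_neg (lt_irrefl _)
        rw [e1]
        rcases hx i with h1 | h1 <;> rcases hy i with h3 | h3 <;>
          rw [h1, h3] <;> norm_num
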